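/- If m : (0,∞) → ℝ is differentiable and satisfies m'(r) + m(r)²/(n-1) + K(r) ≤ 0 for all r > 0, where K is continuous, then for every t > 0, t²·m(t) + (1/(n-1))·∫₀ᵗ (m(r)·r - (n-1))² dr + ∫₀ᵗ r²·K(r) dr ≤ (n-1)·t, provided r·m(r) → n-1 as r → 0⁺ and all integrals converge. -/

import Mathlib

open intervalIntegral Filter Set

/-- Riccati comparison: if `m' + m²/(n-1) + K ≤ 0` on `(0,∞)`, `K` continuous,
`r * m r → n - 1` as `r → 0⁺`, then for every `t > 0` (with the relevant
integrals converging),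
`t² m(t) + (1/(n-1)) ∫₀ᵗ (m(r) r - (n-1))² dr + ∫₀ᵗ r² K(r) dr ≤ (n-1) t`. -/
theorem stmt_1 (n : ℕ) (hn : 2 ≤ n) (m m' K : ℝ → ℝ)
    (hK : Continuous K)
    (hderiv : ∀ r : ℝ, 0 < r → HasDerivAt m (m' r) r)
    (hineq : ∀ r : ℝ, 0 < r → m' r + (m r) ^ 2 / ((n : ℝ) - 1) + K r ≤ 0)
    (hlim : Tendsto (fun r => r * m r) (nhdsWithin 0 (Ioi 0)) (nhds ((n : ℝ) - 1))) :
    ∀ t : ℝ, 0 < t →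
      IntervalIntegrable (fun r => (m r * r - ((n : ℝ) - 1)) ^ 2) MeasureTheory.volume 0 t →
      IntervalIntegrable (fun r => r ^ 2 * m' r) MeasureTheory.volume 0 t →
      IntervalIntegrable (fun r => r * m r) MeasureTheory.volume 0 t →
      t ^ 2 * m t + (1 / ((n : ℝ) - 1)) * (∫ r in (0:ℝ)..t, (m r * r - ((n : ℝ) - 1)) ^ 2)
          + (∫ r in (0:ℝ)..t, r ^ 2 * K r) ≤ ((n : ℝ) - 1) * t := by
  intro t ht h1 h2 h3
  set c : ℝ := (n : ℝ) - 1 with hc_def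
  have hc : (0:ℝ) < c := by
    have : (2:ℝ) ≤ (n:ℝ) := by exact_mod_cast hn
    simp only [hc_def]; linarith
  have iK0 : IntervalIntegrable (fun r => r ^ 2 * K r) MeasureTheory.volume 0 t :=
    ((continuous_pow 2).mul hK).intervalIntegrable 0 t
  -- key inequality for ε ∈ Ioo 0 t
  have key : ∀ ε ∈ Ioo (0:ℝ) t,
      t ^ 2 * m t - ε ^ 2 * m ε + (1 / c) * (∫ r in ε..t, (m r * r - c) ^ 2)
        + (∫ r in ε..t, r ^ 2 * K r) ≤ c * (t - ε) := by
    intro ε hε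
    obtain ⟨hε0, hεt⟩ := hε
    have hsub : uIcc ε t ⊆ uIcc (0:ℝ) t := by
      apply uIcc_subset_uIcc
      · exact ⟨by simp [hε0.le, ht.le], by simp [hεt.le, ht.le]⟩
      · exact right_mem_uIcc
    have i1 : IntervalIntegrable (fun r => (m r * r - c) ^ 2) MeasureTheory.volume ε t :=
      h1.mono_set hsub
    have i2 : IntervalIntegrable (fun r => r ^ 2 * m' r) MeasureTheory.volume ε t :=
      h2.mono_set hsub
    have i3 : IntervalIntegrable (fun r => r * m r) MeasureTheory.volume ε t :=
      h3.mono_set hsub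
    have iK : IntervalIntegrable (fun r => r ^ 2 * K r) MeasureTheory.volume ε t :=
      ((continuous_pow 2).mul hK).intervalIntegrable ε t
    have hpos : ∀ x ∈ uIcc ε t, (0:ℝ) < x := by
      intro x hx
      rw [uIcc_of_le hεt.le] at hx
      exact lt_of_lt_of_le hε0 hx.1
    -- integration by parts via FTC on G r = r ^ 2 * m r
    have iG' : IntervalIntegrable (fun r => 2 * (r * m r) + r ^ 2 * m' r)
        MeasureTheory.volume ε t := (i3.const_mul 2).add i2
    have hparts : ∫ r in ε..t, (2 * (r * m r) + r ^ 2 * m' r)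
        = t ^ 2 * m t - ε ^ 2 * m ε := by
      apply integral_eq_sub_of_hasDerivAt (f := fun r => r ^ 2 * m r)
      · intro x hx
        have := (hasDerivAt_pow 2 x).mul (hderiv x (hpos x hx))
        convert this using 1
        · rfl
        · rfl
        · rw [show (2:ℕ) - 1 = 1 from rfl, pow_one]
          push_cast
          ring
      · exact iG'
    -- the nonpositive integrand
    have hmain : ∫ r in ε..t,
        ((2 * (r * m r) + r ^ 2 * m' r)
          + (((1 / c) * (m r * r - c) ^ 2 + -c) + r ^ 2 * K r)) ≤ 0 := by
      have hint : IntervalIntegrable (fun r =>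
          (2 * (r * m r) + r ^ 2 * m' r)
            + (((1 / c) * (m r * r - c) ^ 2 + -c) + r ^ 2 * K r))
          MeasureTheory.volume ε t := by
        apply iG'.add
        exact ((i1.const_mul _).add intervalIntegrable_const).add iK
      have hzero : IntervalIntegrable (fun _ : ℝ => (0:ℝ)) MeasureTheory.volume ε t :=
        intervalIntegrable_const
      have := integral_mono_on hεt.le hint hzero (fun x hx => by
        have hx0 : 0 < x := lt_of_lt_of_le hε0 hx.1
        have h := hineq x hx0
        have hx2 : (0:ℝ) ≤ x ^ 2 := sq_nonneg x
        have hmul : x ^ 2 * (m' x + (m x) ^ 2 / c + K x) ≤ 0 :=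
          mul_nonpos_of_nonneg_of_nonpos hx2 h
        have hexpand : (2 * (x * m x) + x ^ 2 * m' x)
            + (((1 / c) * (m x * x - c) ^ 2 + -c) + x ^ 2 * K x)
            = x ^ 2 * (m' x + (m x) ^ 2 / c + K x) := by
          field_simp
          ring
        rw [hexpand]
        exact hmul)
      simpa using this
    -- split the integral
    have hsplit : ∫ r in ε..t,
        ((2 * (r * m r) + r ^ 2 * m' r)
          + (((1 / c) * (m r * r - c) ^ 2 + -c) + r ^ 2 * K r))
        = (t ^ 2 * m t - ε ^ 2 * m ε)
          + (((1 / c) * (∫ r in ε..t, (m r * r - c) ^ 2) + -c * (t - ε))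
            + ∫ r in ε..t, r ^ 2 * K r) := by
      rw [integral_add iG' (((i1.const_mul _).add intervalIntegrable_const).add iK),
        integral_add ((i1.const_mul _).add intervalIntegrable_const) iK,
        integral_add (i1.const_mul _) intervalIntegrable_const,
        integral_const_mul, integral_const, hparts]
      simp [smul_eq_mul]
      ring
    rw [hsplit] at hmain
    linarith
  -- pass to the limit ε → 0⁺
  have hne : (nhdsWithin (0:ℝ) (Ioo 0 t)).NeBot := by
    apply mem_closure_iff_nhdsWithin_neBot.mp
    rw [closure_Ioo ht.ne]
    exact ⟨le_refl 0, ht.le⟩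
  have hmono : nhdsWithin (0:ℝ) (Ioo 0 t) ≤ nhdsWithin 0 (Ioi 0) :=
    nhdsWithin_mono 0 Ioo_subset_Ioi_self
  -- limit of ε² m ε
  have hlim1 : Tendsto (fun ε : ℝ => ε ^ 2 * m ε) (nhdsWithin 0 (Ioo 0 t)) (nhds 0) := by
    have h0 : Tendsto (fun ε : ℝ => ε) (nhdsWithin (0:ℝ) (Ioo 0 t)) (nhds 0) :=
      tendsto_id.mono_left nhdsWithin_le_nhds
    have := h0.mul (hlim.mono_left hmono)
    rw [zero_mul] at this
    refine this.congr (fun ε => by ring)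
  -- limits of the tail integrals
  have tail_lim : ∀ f : ℝ → ℝ, IntervalIntegrable f MeasureTheory.volume 0 t →
      Tendsto (fun ε => ∫ r in ε..t, f r) (nhdsWithin 0 (Ioo 0 t))
        (nhds (∫ r in (0:ℝ)..t, f r)) := by
    intro f hf
    have hint : MeasureTheory.IntegrableOn f (uIcc 0 t) MeasureTheory.volume := by
      rw [uIcc_of_le ht.le, integrableOn_Icc_iff_integrableOn_Ioc]
      exact (intervalIntegrable_iff_integrableOn_Ioc_of_le ht.le).mp hf
    have hcont := continuousOn_primitive_interval_left (a := 0) (b := t) hint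
    have h0mem : (0:ℝ) ∈ uIcc (0:ℝ) t := left_mem_uIcc
    have := (hcont 0 h0mem).tendsto
    refine this.mono_left ?_
    apply nhdsWithin_mono
    rw [uIcc_of_le ht.le]
    exact Ioo_subset_Icc_self
  have hlhs : Tendsto (fun ε =>
      t ^ 2 * m t - ε ^ 2 * m ε + (1 / c) * (∫ r in ε..t, (m r * r - c) ^ 2)
        + (∫ r in ε..t, r ^ 2 * K r)) (nhdsWithin 0 (Ioo 0 t))
      (nhds (t ^ 2 * m t - 0 + (1 / c) * (∫ r in (0:ℝ)..t, (m r * r - c) ^ 2)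
        + (∫ r in (0:ℝ)..t, r ^ 2 * K r))) := by
    exact ((tendsto_const_nhds.sub hlim1).add
      ((tail_lim _ h1).const_mul (1 / c))).add (tail_lim _ iK0)
  have hrhs : Tendsto (fun ε : ℝ => c * (t - ε)) (nhdsWithin (0:ℝ) (Ioo 0 t))
      (nhds (c * (t - 0))) := by
    exact (tendsto_const_nhds.sub (tendsto_id.mono_left nhdsWithin_le_nhds)).const_mul c
  have hfinal := le_of_tendsto_of_tendsto hlhs hrhs
    (eventually_nhdsWithin_of_forall (fun ε hε => key ε hε))
  simp only [sub_zero] at hfinal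
  linarith
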